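/- Let E be a finite linearly ordered set and S_1, S_2, S_3 nonempty subsets such that S_1 ◁ S_2, S_2 ◁ S_3, S_1 and S_2 are incomparable under inclusion, and S_2 and S_3 are incomparable under inclusion. Then max S_1 < max S_2 < max S_3, max S_1 ∉ S_3, and S_1 ◁ S_3. -/
import Mathlib


/-- `S ◁ T`: `S` is nonempty, `S` is an initial segment of `S ∪ T` (every element of
`S ∪ T` that is `≤ max S` lies in `S`), and `(S \ {max S}) ∪ T ⊊ S ∪ T`. -/
def Tri {E : Type*} [LinearOrder E] (S T : Finset E) : Prop :=
  S.Nonempty ∧ ∀ m ∈ S, (∀ y ∈ S, y ≤ m) →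
    (∀ x ∈ S ∪ T, x ≤ m → x ∈ S) ∧ S.erase m ∪ T ⊂ S ∪ T

/-- If `S₁ ◁ S₂`, `S₂ ◁ S₃`, and `S₁, S₂` (resp. `S₂, S₃`) are incomparable under
inclusion, then `max S₁ < max S₂ < max S₃`, `max S₁ ∉ S₃`, and `S₁ ◁ S₃`. -/
theorem stmt9 {E : Type*} [Fintype E] [LinearOrder E] (S₁ S₂ S₃ : Finset E)
    (h₁ : S₁.Nonempty) (h₂ : S₂.Nonempty) (h₃ : S₃.Nonempty)
    (h12 : Tri S₁ S₂) (h23 : Tri S₂ S₃)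
    (hi12 : ¬ S₁ ⊆ S₂) (hi21 : ¬ S₂ ⊆ S₁)
    (hi23 : ¬ S₂ ⊆ S₃) (hi32 : ¬ S₃ ⊆ S₂) :
    S₁.max' h₁ < S₂.max' h₂ ∧ S₂.max' h₂ < S₃.max' h₃ ∧
    S₁.max' h₁ ∉ S₃ ∧ Tri S₁ S₃ := by
  obtain ⟨-, H12⟩ := h12
  obtain ⟨-, H23⟩ := h23
  have h12' := H12 (S₁.max' h₁) (S₁.max'_mem h₁) (fun y hy => S₁.le_max' y hy)
  have h23' := H23 (S₂.max' h₂) (S₂.max'_mem h₂) (fun y hy => S₂.le_max' y hy)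
  have hm1S2 : S₁.max' h₁ ∉ S₂ := by
    obtain ⟨x, hx, hx'⟩ := Finset.exists_of_ssubset h12'.2
    simp only [Finset.mem_union, Finset.mem_erase, not_or, not_and_or, not_not] at hx hx'
    rcases hx with hx | hx
    · rcases hx'.1 with h | h
      · rw [← h]; exact hx'.2
      · exact absurd hx h
    · exact absurd hx hx'.2
  have hm2S3 : S₂.max' h₂ ∉ S₃ := by
    obtain ⟨x, hx, hx'⟩ := Finset.exists_of_ssubset h23'.2
    simp only [Finset.mem_union, Finset.mem_erase, not_or, not_and_or, not_not] at hx hx'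
    rcases hx with hx | hx
    · rcases hx'.1 with h | h
      · rw [← h]; exact hx'.2
      · exact absurd hx h
    · exact absurd hx hx'.2
  have h12lt : S₁.max' h₁ < S₂.max' h₂ := by
    by_contra h
    push_neg at h
    exact hi21 fun x hx =>
      h12'.1 x (Finset.mem_union_right _ hx) ((S₂.le_max' x hx).trans h)
  have h23lt : S₂.max' h₂ < S₃.max' h₃ := by
    by_contra h
    push_neg at h
    exact hi32 fun x hx =>
      h23'.1 x (Finset.mem_union_right _ hx) ((S₃.le_max' x hx).trans h)
  have hm1S3 : S₁.max' h₁ ∉ S₃ := fun h =>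
    hm1S2 (h23'.1 _ (Finset.mem_union_right _ h) h12lt.le)
  refine ⟨h12lt, h23lt, hm1S3, h₁, ?_⟩
  intro m hm hmax
  have hme : m = S₁.max' h₁ :=
    le_antisymm (S₁.le_max' m hm) (hmax _ (S₁.max'_mem h₁))
  subst hme
  constructor
  · intro x hx hxle
    rcases Finset.mem_union.mp hx with h | h
    · exact h
    · have hx2 : x ∈ S₂ := h23'.1 x (Finset.mem_union_right _ h) (hxle.trans h12lt.le)
      exact h12'.1 x (Finset.mem_union_right _ hx2) hxle
  · rw [Finset.ssubset_iff_of_subset (Finset.union_subset_union_left (Finset.erase_subset _ _))]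
    exact ⟨S₁.max' h₁, Finset.mem_union_left _ hm, by simp [Finset.mem_erase, hm1S3]⟩
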